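/- Let R be the Laurent polynomial ring over ℂ in the variables Y_{j,n} (j ∈ {1,2}, n ∈ ℤ). Take incidence numbers I_{12} = 1, I_{21} = 3 (type G₂), and set A_{1,n} = Y_{1,n+1} Y_{1,n−1} Y_{2,n}^{−3}, A_{2,n} = Y_{2,n+1} Y_{2,n−1} Y_{1,n}^{−1}. Let S_1^−, S_2^− be the associated screening derivations on R. Then the element F₂ = Y_{2,0} + Y_{2,2}^{−1} Y_{1,1} + Y_{1,3}^{−1} Y_{2,2}² + 2 Y_{2,2} Y_{2,4}^{−1} + Y_{2,4}^{−2} Y_{1,3} + Y_{2,4} Y_{1,5}^{−1} + Y_{2,6}^{−1} lies in Ker S_1^− ∩ Ker S_2^−, and the unique dominant monomial (a monomial involving no negative powers of the variables) occurring in F₂ is Y_{2,0}. -/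

import Mathlib

/-- Exponent lattice of the Laurent polynomial ring in the variables `Y_{j,n}`,
`j ∈ {1,2}`, `n ∈ ℤ` (index `0` stands for the node `1`, index `1` for the node `2`). -/
abbrev LExp2 : Type := (Fin 2 × ℤ) →₀ ℤ

/-- The Laurent polynomial ring over `ℂ` in the variables `Y_{j,n}`. -/
abbrev LRing2 : Type := AddMonoidAlgebra ℂ LExp2

/-- The (invertible) monomial with exponent vector `v`. -/
noncomputable def Ym (v : LExp2) : LRing2 := AddMonoidAlgebra.single v 1

/-- The exponent vector of `Y_{j,n}^k`. -/
noncomputable def E (j : Fin 2) (n k : ℤ) : LExp2 := Finsupp.single (j, n) k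

/-- Exponent of `A_{1,n} = Y_{1,n+1} Y_{1,n−1} Y_{2,n}^{−3}` (type `G₂`: `I₁₂ = 1`, `I₂₁ = 3`). -/
noncomputable def A1G2 (n : ℤ) : LExp2 := E 0 (n + 1) 1 + E 0 (n - 1) 1 + E 1 n (-3)

/-- Exponent of `A_{2,n} = Y_{2,n+1} Y_{2,n−1} Y_{1,n}^{−1}`. -/
noncomputable def A2G2 (n : ℤ) : LExp2 := E 1 (n + 1) 1 + E 1 (n - 1) 1 + E 0 n (-1)

/-- Relations submodule `e_{n+1} − A_n e_{n−1}` for a family of monomial exponents. -/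
noncomputable def scrRel (Av : ℤ → LExp2) : Submodule LRing2 (ℤ →₀ LRing2) :=
  Submodule.span LRing2
    {x | ∃ n : ℤ, x =
      Finsupp.single (n + 1) (1 : LRing2) - Ym (Av n) • Finsupp.single (n - 1) (1 : LRing2)}

/-- Target module of the screening operator. -/
noncomputable abbrev ScrMod (Av : ℤ → LExp2) : Type := (ℤ →₀ LRing2) ⧸ scrRel Av

/-- The class `ē_n` in the quotient module. -/
noncomputable def ebar (Av : ℤ → LExp2) (n : ℤ) : ScrMod Av :=
  Submodule.Quotient.mk (Finsupp.single n (1 : LRing2))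

/-- `F₂ = Y_{2,0} + Y_{2,2}^{−1} Y_{1,1} + Y_{1,3}^{−1} Y_{2,2}² + 2 Y_{2,2} Y_{2,4}^{−1}
+ Y_{2,4}^{−2} Y_{1,3} + Y_{2,4} Y_{1,5}^{−1} + Y_{2,6}^{−1}`. -/
noncomputable def F2G2 : LRing2 :=
  Ym (E 1 0 1)
    + Ym (E 1 2 (-1) + E 0 1 1)
    + Ym (E 0 3 (-1) + E 1 2 2)
    + 2 * Ym (E 1 2 1 + E 1 4 (-1))
    + Ym (E 1 4 (-2) + E 0 3 1)
    + Ym (E 1 4 1 + E 0 5 (-1))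
    + Ym (E 1 6 (-1))

/- ## Auxiliary lemmas -/

lemma Ym_mul (v w : LExp2) : Ym v * Ym w = Ym (v + w) := by
  simp [Ym, AddMonoidAlgebra.single_mul_single]

lemma Ym_zero : Ym 0 = 1 := rfl

lemma E_neg (j : Fin 2) (n k : ℤ) : E j n (-k) = -E j n k := Finsupp.single_neg _ _

lemma E_two (j : Fin 2) (n : ℤ) : E j n 2 = E j n 1 + E j n 1 := by
  rw [E, E, ← Finsupp.single_add]; norm_num

lemma E_ntwo (j : Fin 2) (n : ℤ) : E j n (-2) = E j n (-1) + E j n (-1) := by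
  rw [E, E, ← Finsupp.single_add]; norm_num

lemma two_Ym (v : LExp2) : (2 : LRing2) * Ym v = AddMonoidAlgebra.single v 2 := by
  rw [two_mul, Ym, ← AddMonoidAlgebra.single_add]; norm_num

section
variable {Av : ℤ → LExp2} (S : LRing2 →ₗ[ℂ] ScrMod Av)
  (hL : ∀ x y : LRing2, S (x * y) = x • S y + y • S x)

include hL

lemma S_one : S 1 = 0 := by
  have h := hL 1 1
  simp only [mul_one, one_smul] at h
  exact (left_eq_add.mp h)

lemma S_Ym_add (v w : LExp2) :
    S (Ym (v + w)) = Ym v • S (Ym w) + Ym w • S (Ym v) := by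
  rw [← Ym_mul]; exact hL _ _

lemma S_Ym_neg (v : LExp2) :
    S (Ym (-v)) = -(Ym (-v + -v) • S (Ym v)) := by
  have h := S_Ym_add S hL v (-v)
  rw [add_neg_cancel, Ym_zero, S_one S hL] at h
  have key : Ym v • S (Ym (-v)) = -(Ym (-v) • S (Ym v)) :=
    eq_neg_of_add_eq_zero_left h.symm
  have h2 := congrArg (fun z => Ym (-v) • z) key
  simp only [smul_smul, Ym_mul, smul_neg] at h2
  rwa [neg_add_cancel, Ym_zero, one_smul] at h2

end

lemma ebar_step (Av : ℤ → LExp2) (n : ℤ) :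
    ebar Av (n + 1) = Ym (Av n) • ebar Av (n - 1) := by
  rw [ebar, ebar, ← Submodule.Quotient.mk_smul, Submodule.Quotient.eq]
  exact Submodule.subset_span ⟨n, rfl⟩

/- Exponent identities. -/

lemma id3G2 : (E 1 2 2 + E 0 3 (-1)) + A1G2 2 = E 1 2 (-1) + E 0 1 1 := by
  ext ⟨j, n⟩
  fin_cases j <;>
    simp [A1G2, E, Finsupp.single_apply, Prod.ext_iff] <;> split_ifs <;> omega

lemma id6G2 : (E 1 4 1 + E 0 5 (-1)) + A1G2 4 = E 1 4 (-2) + E 0 3 1 := by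
  ext ⟨j, n⟩
  fin_cases j <;>
    simp [A1G2, E, Finsupp.single_apply, Prod.ext_iff] <;> split_ifs <;> omega

lemma jd2G2 : (E 0 1 1 + E 1 2 (-1)) + A2G2 1 = E 1 0 1 := by
  ext ⟨j, n⟩
  fin_cases j <;>
    simp [A2G2, E, Finsupp.single_apply, Prod.ext_iff] <;> split_ifs <;> omega

lemma jd4G2 : (E 1 2 1 + E 1 4 (-1)) + A2G2 3 = E 0 3 (-1) + E 1 2 2 := by
  ext ⟨j, n⟩
  fin_cases j <;>
    simp [A2G2, E, Finsupp.single_apply, Prod.ext_iff] <;> split_ifs <;> omega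

lemma jd5G2 : (E 0 3 1 + E 1 4 (-2)) + A2G2 3 = E 1 4 (-1) + E 1 2 1 := by
  ext ⟨j, n⟩
  fin_cases j <;>
    simp [A2G2, E, Finsupp.single_apply, Prod.ext_iff] <;> split_ifs <;> omega

lemma jd7G2 : (E 1 6 (-1)) + A2G2 5 = E 0 5 (-1) + E 1 4 1 := by
  ext ⟨j, n⟩
  fin_cases j <;>
    simp [A2G2, E, Finsupp.single_apply, Prod.ext_iff] <;> split_ifs <;> omega

set_option maxHeartbeats 1000000 in
/-- For type `G₂`, the element `F₂` lies in `Ker S₁⁻ ∩ Ker S₂⁻`, and the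
unique dominant monomial occurring in `F₂` is `Y_{2,0}`. -/
theorem stmt6
    (S1 : LRing2 →ₗ[ℂ] ScrMod A1G2) (S2 : LRing2 →ₗ[ℂ] ScrMod A2G2)
    (hLeib1 : ∀ x y : LRing2, S1 (x * y) = x • S1 y + y • S1 x)
    (hLeib2 : ∀ x y : LRing2, S2 (x * y) = x • S2 y + y • S2 x)
    (hval1 : ∀ (j : Fin 2) (n : ℤ),
      S1 (Ym (E j n 1)) = if j = 0 then Ym (E 0 n 1) • ebar A1G2 n else 0)
    (hval2 : ∀ (j : Fin 2) (n : ℤ),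
      S2 (Ym (E j n 1)) = if j = 1 then Ym (E 1 n 1) • ebar A2G2 n else 0) :
    (S1 F2G2 = 0 ∧ S2 F2G2 = 0) ∧
    (∀ v : LExp2, (v ∈ F2G2.coeff.support ∧ ∀ p, 0 ≤ v p) ↔ v = E 1 0 1) := by
  -- basic values of S1
  have z1 : ∀ n : ℤ, S1 (Ym (E 1 n 1)) = 0 := fun n => by
    rw [hval1 1 n, if_neg (by decide)]
  have p1 : ∀ n : ℤ, S1 (Ym (E 0 n 1)) = Ym (E 0 n 1) • ebar A1G2 n := fun n => by
    rw [hval1 0 n, if_pos rfl]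
  have z1n : ∀ n : ℤ, S1 (Ym (E 1 n (-1))) = 0 := fun n => by
    rw [show ((-1 : ℤ)) = -(1 : ℤ) from rfl, E_neg, S_Ym_neg S1 hLeib1, z1, smul_zero, neg_zero]
  have z1p2 : ∀ n : ℤ, S1 (Ym (E 1 n 2)) = 0 := fun n => by
    rw [E_two, S_Ym_add S1 hLeib1, z1, smul_zero, add_zero]
  have z1n2 : ∀ n : ℤ, S1 (Ym (E 1 n (-2))) = 0 := fun n => by
    rw [E_ntwo, S_Ym_add S1 hLeib1, z1n, smul_zero, add_zero]
  have p1n : ∀ n : ℤ, S1 (Ym (E 0 n (-1))) = -(Ym (E 0 n (-1)) • ebar A1G2 n) := fun n => by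
    rw [show ((-1 : ℤ)) = -(1 : ℤ) from rfl, E_neg, S_Ym_neg S1 hLeib1, p1, smul_smul, Ym_mul]
    have h : (-E 0 n 1 + -E 0 n 1) + E 0 n 1 = -E 0 n 1 := by abel
    rw [h]
  -- basic values of S2
  have z2 : ∀ n : ℤ, S2 (Ym (E 0 n 1)) = 0 := fun n => by
    rw [hval2 0 n, if_neg (by decide)]
  have p2 : ∀ n : ℤ, S2 (Ym (E 1 n 1)) = Ym (E 1 n 1) • ebar A2G2 n := fun n => by
    rw [hval2 1 n, if_pos rfl]
  have z2n : ∀ n : ℤ, S2 (Ym (E 0 n (-1))) = 0 := fun n => by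
    rw [show ((-1 : ℤ)) = -(1 : ℤ) from rfl, E_neg, S_Ym_neg S2 hLeib2, z2, smul_zero, neg_zero]
  have p2n : ∀ n : ℤ, S2 (Ym (E 1 n (-1))) = -(Ym (E 1 n (-1)) • ebar A2G2 n) := fun n => by
    rw [show ((-1 : ℤ)) = -(1 : ℤ) from rfl, E_neg, S_Ym_neg S2 hLeib2, p2, smul_smul, Ym_mul]
    have h : (-E 1 n 1 + -E 1 n 1) + E 1 n 1 = -E 1 n 1 := by abel
    rw [h]
  have p2p2 : ∀ n : ℤ, S2 (Ym (E 1 n 2)) =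
      Ym (E 1 n 2) • ebar A2G2 n + Ym (E 1 n 2) • ebar A2G2 n := fun n => by
    rw [E_two, S_Ym_add S2 hLeib2, p2, smul_smul, Ym_mul, ← E_two]
  have p2n2 : ∀ n : ℤ, S2 (Ym (E 1 n (-2))) =
      -(Ym (E 1 n (-2)) • ebar A2G2 n) + -(Ym (E 1 n (-2)) • ebar A2G2 n) := fun n => by
    rw [E_ntwo, S_Ym_add S2 hLeib2, p2n, smul_neg, smul_smul, Ym_mul, ← E_ntwo]
  -- normalized quotient relations
  have e3 : ebar A1G2 3 = Ym (A1G2 2) • ebar A1G2 1 := by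
    have h := ebar_step A1G2 2; norm_num at h; exact h
  have e5 : ebar A1G2 5 = Ym (A1G2 4) • ebar A1G2 3 := by
    have h := ebar_step A1G2 4; norm_num at h; exact h
  have f2 : ebar A2G2 2 = Ym (A2G2 1) • ebar A2G2 0 := by
    have h := ebar_step A2G2 1; norm_num at h; exact h
  have f4 : ebar A2G2 4 = Ym (A2G2 3) • ebar A2G2 2 := by
    have h := ebar_step A2G2 3; norm_num at h; exact h
  have f6 : ebar A2G2 6 = Ym (A2G2 5) • ebar A2G2 4 := by
    have h := ebar_step A2G2 5; norm_num at h; exact h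
  -- S1 on the monomials of F2
  have hm2 : S1 (Ym (E 1 2 (-1) + E 0 1 1)) =
      Ym (E 1 2 (-1) + E 0 1 1) • ebar A1G2 1 := by
    rw [S_Ym_add S1 hLeib1, p1, z1n, smul_zero, add_zero, smul_smul, Ym_mul]
  have hm3 : S1 (Ym (E 0 3 (-1) + E 1 2 2)) =
      -(Ym (E 1 2 2 + E 0 3 (-1)) • ebar A1G2 3) := by
    rw [S_Ym_add S1 hLeib1, p1n, z1p2, smul_zero, zero_add, smul_neg, smul_smul, Ym_mul]
  have hm4 : S1 (Ym (E 1 2 1 + E 1 4 (-1))) = 0 := by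
    rw [S_Ym_add S1 hLeib1, z1, z1n, smul_zero, smul_zero, add_zero]
  have hm5 : S1 (Ym (E 1 4 (-2) + E 0 3 1)) =
      Ym (E 1 4 (-2) + E 0 3 1) • ebar A1G2 3 := by
    rw [S_Ym_add S1 hLeib1, p1, z1n2, smul_zero, add_zero, smul_smul, Ym_mul]
  have hm6 : S1 (Ym (E 1 4 1 + E 0 5 (-1))) =
      -(Ym (E 1 4 1 + E 0 5 (-1)) • ebar A1G2 5) := by
    rw [S_Ym_add S1 hLeib1, p1n, z1, smul_zero, add_zero, smul_neg, smul_smul, Ym_mul]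
  -- conversion to common ebar's
  have t3 : Ym (E 1 2 2 + E 0 3 (-1)) • ebar A1G2 3 =
      Ym (E 1 2 (-1) + E 0 1 1) • ebar A1G2 1 := by
    rw [e3, smul_smul, Ym_mul, id3G2]
  have t6 : Ym (E 1 4 1 + E 0 5 (-1)) • ebar A1G2 5 =
      Ym (E 1 4 (-2) + E 0 3 1) • ebar A1G2 3 := by
    rw [e5, smul_smul, Ym_mul, id6G2]
  have hS1 : S1 F2G2 = 0 := by
    unfold F2G2
    rw [two_mul]
    simp only [map_add]
    rw [z1 0, hm2, hm3, hm4, hm5, hm6, z1n 6, t3, t6]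
    abel
  -- S2 on the monomials of F2
  have km2 : S2 (Ym (E 1 2 (-1) + E 0 1 1)) =
      -(Ym (E 0 1 1 + E 1 2 (-1)) • ebar A2G2 2) := by
    rw [S_Ym_add S2 hLeib2, z2, p2n, smul_zero, zero_add, smul_neg, smul_smul, Ym_mul]
  have km3 : S2 (Ym (E 0 3 (-1) + E 1 2 2)) =
      Ym (E 0 3 (-1) + E 1 2 2) • ebar A2G2 2 + Ym (E 0 3 (-1) + E 1 2 2) • ebar A2G2 2 := by
    rw [S_Ym_add S2 hLeib2, p2p2, z2n, smul_zero, add_zero, smul_add, smul_smul, Ym_mul]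
  have km4 : S2 (Ym (E 1 2 1 + E 1 4 (-1))) =
      -(Ym (E 1 2 1 + E 1 4 (-1)) • ebar A2G2 4) +
        Ym (E 1 4 (-1) + E 1 2 1) • ebar A2G2 2 := by
    rw [S_Ym_add S2 hLeib2, p2n, p2, smul_neg, smul_smul, Ym_mul, smul_smul, Ym_mul]
  have km5 : S2 (Ym (E 1 4 (-2) + E 0 3 1)) =
      -(Ym (E 0 3 1 + E 1 4 (-2)) • ebar A2G2 4) +
        -(Ym (E 0 3 1 + E 1 4 (-2)) • ebar A2G2 4) := by
    rw [S_Ym_add S2 hLeib2, z2, p2n2, smul_zero, zero_add, smul_add, smul_neg, smul_smul, Ym_mul]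
  have km6 : S2 (Ym (E 1 4 1 + E 0 5 (-1))) =
      Ym (E 0 5 (-1) + E 1 4 1) • ebar A2G2 4 := by
    rw [S_Ym_add S2 hLeib2, z2n, p2, smul_zero, zero_add, smul_smul, Ym_mul]
  have u2 : Ym (E 0 1 1 + E 1 2 (-1)) • ebar A2G2 2 = Ym (E 1 0 1) • ebar A2G2 0 := by
    rw [f2, smul_smul, Ym_mul, jd2G2]
  have u4 : Ym (E 1 2 1 + E 1 4 (-1)) • ebar A2G2 4 =
      Ym (E 0 3 (-1) + E 1 2 2) • ebar A2G2 2 := by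
    rw [f4, smul_smul, Ym_mul, jd4G2]
  have u5 : Ym (E 0 3 1 + E 1 4 (-2)) • ebar A2G2 4 =
      Ym (E 1 4 (-1) + E 1 2 1) • ebar A2G2 2 := by
    rw [f4, smul_smul, Ym_mul, jd5G2]
  have u7 : Ym (E 1 6 (-1)) • ebar A2G2 6 = Ym (E 0 5 (-1) + E 1 4 1) • ebar A2G2 4 := by
    rw [f6, smul_smul, Ym_mul, jd7G2]
  have hS2 : S2 F2G2 = 0 := by
    unfold F2G2
    rw [two_mul]
    simp only [map_add]
    rw [p2 0, km2, km3, km4, km5, km6, p2n 6, u2, u4, u5, u7]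
    abel
  refine ⟨⟨hS1, hS2⟩, ?_⟩
  -- Part 2: dominant monomials
  have happ : ∀ w : LExp2, F2G2.coeff w =
      (if E 1 0 1 = w then (1 : ℂ) else 0)
        + (if E 1 2 (-1) + E 0 1 1 = w then 1 else 0)
        + (if E 0 3 (-1) + E 1 2 2 = w then 1 else 0)
        + (if E 1 2 1 + E 1 4 (-1) = w then 2 else 0)
        + (if E 1 4 (-2) + E 0 3 1 = w then 1 else 0)
        + (if E 1 4 1 + E 0 5 (-1) = w then 1 else 0)
        + (if E 1 6 (-1) = w then 1 else 0) := by
    intro w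
    unfold F2G2
    rw [two_Ym]
    simp only [Ym]
    simp only [AddMonoidAlgebra.coeff_add, AddMonoidAlgebra.coeff_single]
    rw [Finsupp.add_apply, Finsupp.add_apply, Finsupp.add_apply, Finsupp.add_apply,
      Finsupp.add_apply, Finsupp.add_apply, Finsupp.single_apply, Finsupp.single_apply,
      Finsupp.single_apply, Finsupp.single_apply, Finsupp.single_apply, Finsupp.single_apply,
      Finsupp.single_apply]
  intro v
  constructor
  · rintro ⟨hv, hpos⟩
    have hne : F2G2.coeff v ≠ 0 := Finsupp.mem_support_iff.mp hv
    rw [happ v] at hne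
    have hcase : E 1 0 1 = v ∨ E 1 2 (-1) + E 0 1 1 = v ∨ E 0 3 (-1) + E 1 2 2 = v ∨
        E 1 2 1 + E 1 4 (-1) = v ∨ E 1 4 (-2) + E 0 3 1 = v ∨ E 1 4 1 + E 0 5 (-1) = v ∨
        E 1 6 (-1) = v := by
      by_contra hc
      push_neg at hc
      obtain ⟨h1, h2, h3, h4, h5, h6, h7⟩ := hc
      rw [if_neg h1, if_neg h2, if_neg h3, if_neg h4, if_neg h5, if_neg h6, if_neg h7] at hne
      simp at hne
    rcases hcase with h | h | h | h | h | h | h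
    · exact h.symm
    · exfalso
      have hp := hpos ((1 : Fin 2), (2 : ℤ))
      rw [← h] at hp
      simp [E, Finsupp.add_apply, Finsupp.single_apply] at hp
    · exfalso
      have hp := hpos ((0 : Fin 2), (3 : ℤ))
      rw [← h] at hp
      simp [E, Finsupp.add_apply, Finsupp.single_apply] at hp
    · exfalso
      have hp := hpos ((1 : Fin 2), (4 : ℤ))
      rw [← h] at hp
      simp [E, Finsupp.add_apply, Finsupp.single_apply] at hp
    · exfalso
      have hp := hpos ((1 : Fin 2), (4 : ℤ))
      rw [← h] at hp
      simp [E, Finsupp.add_apply, Finsupp.single_apply] at hp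
    · exfalso
      have hp := hpos ((0 : Fin 2), (5 : ℤ))
      rw [← h] at hp
      simp [E, Finsupp.add_apply, Finsupp.single_apply] at hp
    · exfalso
      have hp := hpos ((1 : Fin 2), (6 : ℤ))
      rw [← h] at hp
      simp [E, Finsupp.add_apply, Finsupp.single_apply] at hp
  · intro h
    subst h
    have ne2 : E 1 2 (-1) + E 0 1 1 ≠ E 1 0 1 := by
      intro h
      have := congrArg (fun f => f ((1 : Fin 2), (2 : ℤ))) h
      simp [E, Finsupp.add_apply, Finsupp.single_apply] at this
    have ne3 : E 0 3 (-1) + E 1 2 2 ≠ E 1 0 1 := by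
      intro h
      have := congrArg (fun f => f ((0 : Fin 2), (3 : ℤ))) h
      simp [E, Finsupp.add_apply, Finsupp.single_apply] at this
    have ne4 : E 1 2 1 + E 1 4 (-1) ≠ E 1 0 1 := by
      intro h
      have := congrArg (fun f => f ((1 : Fin 2), (4 : ℤ))) h
      simp [E, Finsupp.add_apply, Finsupp.single_apply] at this
    have ne5 : E 1 4 (-2) + E 0 3 1 ≠ E 1 0 1 := by
      intro h
      have := congrArg (fun f => f ((1 : Fin 2), (4 : ℤ))) h
      simp [E, Finsupp.add_apply, Finsupp.single_apply] at this
    have ne6 : E 1 4 1 + E 0 5 (-1) ≠ E 1 0 1 := by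
      intro h
      have := congrArg (fun f => f ((0 : Fin 2), (5 : ℤ))) h
      simp [E, Finsupp.add_apply, Finsupp.single_apply] at this
    have ne7 : E 1 6 (-1) ≠ E 1 0 1 := by
      intro h
      have := congrArg (fun f => f ((1 : Fin 2), (6 : ℤ))) h
      simp [E, Finsupp.single_apply] at this
    refine ⟨Finsupp.mem_support_iff.mpr ?_, ?_⟩
    · rw [happ, if_pos rfl, if_neg ne2, if_neg ne3, if_neg ne4, if_neg ne5, if_neg ne6,
        if_neg ne7]
      norm_num
    · intro p
      rw [E, Finsupp.single_apply]
      split_ifs <;> norm_num
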